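/- For all ranked optimization problems P and Q (both interpreted as CO problems or both interpreted as ASO problems) and every rank interval [i,j], P ≡^{s,[i,j]} Q if and only if the following three conditions hold: (1) π(P_{<i}) = π(Q_{<i}); (2) (>^P)_{π(P_{<i})} = (>^Q)_{π(Q_{<i})}; (3) for every I, J ∈ π(P_{<i}) such that i < diff^P(I,J) or i < diff^Q(I,J), either diff^P(I,J) = diff^Q(I,J), or both diff^P(I,J) > j and diff^Q(I,J) > j. -/

import Mathlib

open scoped Classical

/-- Propositional formulas over a universe `U` of atoms, built from atoms,
`⊥`, conjunction, disjunction and implication. -/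
inductive Formula (U : Type) : Type where
  | atom : U → Formula U
  | bot  : Formula U
  | conj : Formula U → Formula U → Formula U
  | disj : Formula U → Formula U → Formula U
  | imp  : Formula U → Formula U → Formula U

variable {U : Type}

/-- Classical satisfaction `I ⊨ φ`. -/
def Sat (I : Set U) : Formula U → Prop
  | .atom a => a ∈ I
  | .bot => False
  | .conj φ ψ => Sat I φ ∧ Sat I ψ
  | .disj φ ψ => Sat I φ ∨ Sat I ψ
  | .imp φ ψ => Sat I φ → Sat I ψ

/-- Classical satisfaction of a theory. -/
def SatTheory (I : Set U) (T : Set (Formula U)) : Prop := ∀ φ ∈ T, Sat I φ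

/-- `Mod T`: the classical models of a theory `T`. -/
def models (T : Set (Formula U)) : Set (Set U) := {I | SatTheory I T}

/-- HT-satisfaction `⟨I, J⟩ ⊨_HT φ` (for `I ⊆ J`). -/
def SatHT (I J : Set U) : Formula U → Prop
  | .atom a => a ∈ I
  | .bot => False
  | .conj φ ψ => SatHT I J φ ∧ SatHT I J ψ
  | .disj φ ψ => SatHT I J φ ∨ SatHT I J ψ
  | .imp φ ψ => Sat J (Formula.imp φ ψ) ∧ (¬ SatHT I J φ ∨ SatHT I J ψ)

/-- HT-satisfaction of a theory. -/
def SatHTTheory (I J : Set U) (T : Set (Formula U)) : Prop := ∀ φ ∈ T, SatHT I J φ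

/-- `HT T`: the set of HT-models `⟨I,J⟩` (with `I ⊆ J`) of a theory `T`. -/
def HTmod (T : Set (Formula U)) : Set (Set U × Set U) :=
  {p | p.1 ⊆ p.2 ∧ SatHTTheory p.1 p.2 T}

/-- `AS T`: the equilibrium models (answer sets) of a theory `T`. -/
def AS (T : Set (Formula U)) : Set (Set U) :=
  {I | SatHTTheory I I T ∧ ∀ J : Set U, J ⊂ I → ¬ SatHTTheory J I T}

/-- A ranked preference rule `φ₁ > ⋯ > φₖ ←ʲ ψ` with nonempty head and rank `j ≥ 1`. -/
structure Rule (U : Type) : Type where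
  head : List (Formula U)
  body : Formula U
  rank : ℕ
  head_ne : head ≠ []
  rank_pos : 1 ≤ rank

/-- Satisfaction degree `v_I(r)`: the least (1-based) index of a satisfied head formula
if `I` satisfies the body and some head formula; `1` otherwise. -/
noncomputable def degree (I : Set U) (r : Rule U) : ℕ :=
  if Sat I r.body ∧ ∃ φ ∈ r.head, Sat I φ then
    sInf {n : ℕ | ∃ k : Fin r.head.length, n = k.1 + 1 ∧ Sat I (r.head.get k)}
  else 1

/-- The strict preference `I >^S J` induced by a selector `S`. -/
def gtSel (S : Set (Rule U)) (I J : Set U) : Prop :=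
  ∃ r' ∈ S, degree I r' < degree J r' ∧
    (∀ r ∈ S, r.rank = r'.rank → degree I r ≤ degree J r) ∧
    (∀ r ∈ S, r.rank < r'.rank → degree I r = degree J r)

/-- The indifference `I ≈^S J` induced by a selector `S`. -/
def simSel (S : Set (Rule U)) (I J : Set U) : Prop :=
  ∀ r ∈ S, degree I r = degree J r

/-- The preference `I ≥^S J` induced by a selector `S`. -/
def geSel (S : Set (Rule U)) (I J : Set U) : Prop :=
  simSel S I J ∨ gtSel S I J

/-- An optimization problem: a generator theory plus a finite selector. -/
structure OptProblem (U : Type) : Type where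
  gen : Set (Formula U)
  sel : Set (Rule U)
  sel_finite : sel.Finite

/-- Union of optimization problems. -/
def OptProblem.union (P Q : OptProblem U) : OptProblem U :=
  ⟨P.gen ∪ Q.gen, P.sel ∪ Q.sel, P.sel_finite.union Q.sel_finite⟩

/-- `P_{<i}`: the restriction of `P` to preference rules of rank `< i`. -/
def OptProblem.below (P : OptProblem U) (i : ℕ) : OptProblem U :=
  ⟨P.gen, {r ∈ P.sel | r.rank < i}, P.sel_finite.subset (Set.sep_subset _ _)⟩

/-- The two semantics for generators: classical (CO problems) and
equilibrium-model/answer-set (ASO problems). -/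
inductive Sem : Type where
  | co : Sem
  | aso : Sem

/-- `μ(P)`: the outcomes of `P` under the chosen semantics. -/
def outcomes (sem : Sem) (P : OptProblem U) : Set (Set U) :=
  match sem with
  | Sem.co => models P.gen
  | Sem.aso => AS P.gen

/-- `π(P)`: the preferred (optimal) outcomes of `P`. -/
def pref (sem : Sem) (P : OptProblem U) : Set (Set U) :=
  {I | I ∈ outcomes sem P ∧ ¬ ∃ J ∈ outcomes sem P, gtSel P.sel J I}

/-- `diff^P(I,J)`: the largest `k` with `I ≈^{P_{<k}} J` (`∞` if this holds for all `k`). -/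
noncomputable def diff (P : OptProblem U) (I J : Set U) : ℕ∞ :=
  if ∀ k : ℕ, simSel (P.below k).sel I J then ⊤
  else ((sSup {k : ℕ | simSel (P.below k).sel I J} : ℕ) : ℕ∞)

/-- Restriction `≻_V` of a relation on interpretations to a set `V` of interpretations. -/
def restrictRel (rel : Set U → Set U → Prop) (V : Set (Set U)) : Set U → Set U → Prop :=
  fun A B => rel A B ∧ A ∈ V ∧ B ∈ V

/-- All rules of `S` have rank in the interval `[i,j]` (`j` may be `∞`). -/
def inRankInterval (i : ℕ) (j : ℕ∞) (S : Set (Rule U)) : Prop :=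
  ∀ r ∈ S, i ≤ r.rank ∧ (r.rank : ℕ∞) ≤ j

/-- Strong sel-equivalence `P ≡^{s,[i,j]} Q`: same preferred outcomes under addition of any
context from `L^{s,[i,j]}` (empty generator, selector with ranks in `[i,j]`). -/
def seqv (sem : Sem) (i : ℕ) (j : ℕ∞) (P Q : OptProblem U) : Prop :=
  ∀ R : OptProblem U, R.gen = ∅ → inRankInterval i j R.sel →
    pref sem (P.union R) = pref sem (Q.union R)

/-- Strong gen-equivalence `P ≡_g Q`: same preferred outcomes under addition of any
generator context from `L^g` (empty selector). -/
def geqv (sem : Sem) (P Q : OptProblem U) : Prop :=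
  ∀ R : OptProblem U, R.sel = ∅ →
    pref sem (P.union R) = pref sem (Q.union R)

/-- Strong (combined) equivalence `P ≡^{s,[i,j]}_g Q`: same preferred outcomes under addition
of any context from `L^{[i,j]}` (arbitrary generator, selector with ranks in `[i,j]`). -/
def sgeqv (sem : Sem) (i : ℕ) (j : ℕ∞) (P Q : OptProblem U) : Prop :=
  ∀ R : OptProblem U, inRankInterval i j R.sel →
    pref sem (P.union R) = pref sem (Q.union R)

/-! ### Auxiliary material -/

section Aux
variable {U : Type}

/-- A tautological formula. -/
def fTop : Formula U := Formula.imp Formula.bot Formula.bot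

lemma sat_fTop (I : Set U) : Sat I fTop := fun h => h

/-- Negation. -/
def fNeg (φ : Formula U) : Formula U := Formula.imp φ Formula.bot

lemma sat_fNeg (I : Set U) (φ : Formula U) : Sat I (fNeg φ) ↔ ¬ Sat I φ := Iff.rfl

/-- The atoms occurring in a formula. -/
def Formula.atoms : Formula U → Set U
  | .atom a => {a}
  | .bot => ∅
  | .conj φ ψ => φ.atoms ∪ ψ.atoms
  | .disj φ ψ => φ.atoms ∪ ψ.atoms
  | .imp φ ψ => φ.atoms ∪ ψ.atoms

lemma Formula.atoms_finite (φ : Formula U) : φ.atoms.Finite := by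
  induction φ with
  | atom a => exact Set.finite_singleton a
  | bot => exact Set.finite_empty
  | conj φ ψ h1 h2 => exact h1.union h2
  | disj φ ψ h1 h2 => exact h1.union h2
  | imp φ ψ h1 h2 => exact h1.union h2

/-- Satisfaction only depends on the atoms of the formula. -/
lemma sat_congr {I K : Set U} (φ : Formula U) (h : ∀ a ∈ φ.atoms, (a ∈ I ↔ a ∈ K)) :
    Sat I φ ↔ Sat K φ := by
  induction φ with
  | atom a => exact h a (by simp [Formula.atoms])
  | bot => exact Iff.rfl
  | conj φ ψ h1 h2 =>
      exact and_congr (h1 fun a ha => h a (Or.inl ha)) (h2 fun a ha => h a (Or.inr ha))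
  | disj φ ψ h1 h2 =>
      exact or_congr (h1 fun a ha => h a (Or.inl ha)) (h2 fun a ha => h a (Or.inr ha))
  | imp φ ψ h1 h2 =>
      exact imp_congr (h1 fun a ha => h a (Or.inl ha)) (h2 fun a ha => h a (Or.inr ha))

/-- The atoms occurring in a rule. -/
def ruleAtoms (r : Rule U) : Set U :=
  r.body.atoms ∪ ⋃ φ ∈ {ψ | ψ ∈ r.head}, Formula.atoms φ

lemma ruleAtoms_finite (r : Rule U) : (ruleAtoms r).Finite :=
  r.body.atoms_finite.union <|
    Set.Finite.biUnion (List.finite_toSet r.head) fun φ _ => φ.atoms_finite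

lemma body_atoms_subset (r : Rule U) : r.body.atoms ⊆ ruleAtoms r := Set.subset_union_left

lemma head_atoms_subset (r : Rule U) {φ : Formula U} (hφ : φ ∈ r.head) :
    φ.atoms ⊆ ruleAtoms r :=
  subset_trans (Set.subset_biUnion_of_mem (u := fun φ => Formula.atoms φ)
    (show φ ∈ {ψ : Formula U | ψ ∈ r.head} from hφ)) Set.subset_union_right

/-- The degree of a rule only depends on the atoms of the rule. -/
lemma degree_congr {I K : Set U} (r : Rule U) (h : ∀ a ∈ ruleAtoms r, (a ∈ I ↔ a ∈ K)) :
    degree I r = degree K r := by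
  have hb : Sat I r.body ↔ Sat K r.body :=
    sat_congr _ fun a ha => h a (body_atoms_subset r ha)
  have hh : ∀ φ ∈ r.head, (Sat I φ ↔ Sat K φ) := fun φ hφ =>
    sat_congr _ fun a ha => h a (head_atoms_subset r hφ ha)
  have hcond : (Sat I r.body ∧ ∃ φ ∈ r.head, Sat I φ) ↔
      (Sat K r.body ∧ ∃ φ ∈ r.head, Sat K φ) := by
    apply and_congr hb
    constructor
    · rintro ⟨φ, hφ, hs⟩; exact ⟨φ, hφ, (hh φ hφ).1 hs⟩
    · rintro ⟨φ, hφ, hs⟩; exact ⟨φ, hφ, (hh φ hφ).2 hs⟩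
  unfold degree
  by_cases hc : Sat I r.body ∧ ∃ φ ∈ r.head, Sat I φ
  · rw [if_pos hc, if_pos (hcond.1 hc)]
    congr 1
    ext n
    exact exists_congr fun k => and_congr_right fun _ => hh _ (List.get_mem r.head k)
  · rw [if_neg hc, if_neg (fun hc' => hc (hcond.2 hc'))]

lemma one_le_degree (I : Set U) (r : Rule U) : 1 ≤ degree I r := by
  unfold degree
  split
  · rename_i hc
    obtain ⟨hb, φ, hφ, hs⟩ := hc
    obtain ⟨k, hk⟩ := List.get_of_mem hφ
    have hne : {n : ℕ | ∃ k : Fin r.head.length, n = k.1 + 1 ∧ Sat I (r.head.get k)}.Nonempty :=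
      ⟨k.1 + 1, k, rfl, by rw [hk]; exact hs⟩
    obtain ⟨k', hk', _⟩ := Nat.sInf_mem hne
    omega
  · exact le_refl 1

/-- A rule with a two-formula head, tautological body and rank `k`. -/
def mkRule (φ ψ : Formula U) (k : ℕ) (hk : 1 ≤ k) : Rule U :=
  ⟨[φ, ψ], fTop, k, by simp, hk⟩

lemma degree_mkRule (I : Set U) (φ ψ : Formula U) (k : ℕ) (hk : 1 ≤ k) :
    degree I (mkRule φ ψ k hk) = if Sat I φ then 1 else if Sat I ψ then 2 else 1 := by
  unfold degree mkRule
  by_cases h1 : Sat I φ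
  · rw [if_pos ⟨sat_fTop I, φ, by simp, h1⟩, if_pos h1]
    have hmem : 1 ∈ {n : ℕ | ∃ k' : Fin ([φ, ψ] : List (Formula U)).length,
        n = k'.1 + 1 ∧ Sat I ([φ, ψ].get k')} := ⟨⟨0, by simp⟩, rfl, h1⟩
    have h0 : 0 ∉ {n : ℕ | ∃ k' : Fin ([φ, ψ] : List (Formula U)).length,
        n = k'.1 + 1 ∧ Sat I ([φ, ψ].get k')} := by
      rintro ⟨k', hk', -⟩; omega
    refine le_antisymm (Nat.sInf_le hmem) ?_
    obtain ⟨k', hk', -⟩ := Nat.sInf_mem (⟨1, hmem⟩ : Set.Nonempty _)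
    rw [hk']
    omega
  · by_cases h2 : Sat I ψ
    · rw [if_pos ⟨sat_fTop I, ψ, by simp, h2⟩, if_neg h1, if_pos h2]
      have hset : {n : ℕ | ∃ k' : Fin ([φ, ψ] : List (Formula U)).length,
          n = k'.1 + 1 ∧ Sat I ([φ, ψ].get k')} = {2} := by
        ext n
        constructor
        · rintro ⟨⟨kv, hkv⟩, rfl, hs⟩
          have hkv2 : kv < 2 := by simpa using hkv
          interval_cases kv
          · exact absurd hs h1
          · rfl
        · rintro rfl
          exact ⟨⟨1, by simp⟩, rfl, h2⟩
      rw [hset, csInf_singleton]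
    · rw [if_neg, if_neg h1, if_neg h2]
      rintro ⟨-, χ, hχ, hs⟩
      simp only [List.mem_cons, List.mem_singleton, List.not_mem_nil, or_false] at hχ
      rcases hχ with rfl | rfl
      · exact h1 hs
      · exact h2 hs

end Aux
section Aux2
variable {U : Type}

/-- `I` and `J` agree on all rules of `S` of rank below `k`. -/
def simBelow (S : Set (Rule U)) (k : ℕ) (I J : Set U) : Prop :=
  ∀ r ∈ S, r.rank < k → degree I r = degree J r

/-- The `diff` value of a selector. -/
noncomputable def selDiff (S : Set (Rule U)) (I J : Set U) : ℕ∞ :=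
  if ∀ k : ℕ, simBelow S k I J then ⊤
  else ((sSup {k : ℕ | simBelow S k I J} : ℕ) : ℕ∞)

lemma simBelow_anti {S : Set (Rule U)} {k k' : ℕ} {I J : Set U} (h : k ≤ k')
    (hs : simBelow S k' I J) : simBelow S k I J :=
  fun r hr hrk => hs r hr (lt_of_lt_of_le hrk h)

lemma simBelow_zero (S : Set (Rule U)) (I J : Set U) : simBelow S 0 I J :=
  fun _ _ h => absurd h (by omega)

lemma simSel_below_iff (P : OptProblem U) (k : ℕ) (I J : Set U) :
    simSel (P.below k).sel I J ↔ simBelow P.sel k I J := by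
  constructor
  · intro h r hr hrk; exact h r ⟨hr, hrk⟩
  · rintro h r ⟨hr, hrk⟩; exact h r hr hrk

lemma diff_eq_selDiff (P : OptProblem U) (I J : Set U) :
    diff P I J = selDiff P.sel I J := by
  have hs : {k : ℕ | simSel (P.below k).sel I J} = {k : ℕ | simBelow P.sel k I J} :=
    Set.ext fun k => simSel_below_iff P k I J
  unfold diff selDiff
  rw [hs]
  by_cases h : ∀ k : ℕ, simBelow P.sel k I J
  · rw [if_pos fun k => (simSel_below_iff P k I J).2 (h k), if_pos h]
  · rw [if_neg fun h' => h fun k => (simSel_below_iff P k I J).1 (h' k), if_neg h]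

lemma le_selDiff_iff {S : Set (Rule U)} {I J : Set U} (k : ℕ) :
    (k : ℕ∞) ≤ selDiff S I J ↔ simBelow S k I J := by
  unfold selDiff
  by_cases hall : ∀ k : ℕ, simBelow S k I J
  · rw [if_pos hall]; simp [hall k]
  · rw [if_neg hall]
    push_neg at hall
    obtain ⟨k0, hk0⟩ := hall
    have hbdd : BddAbove {k : ℕ | simBelow S k I J} := by
      refine ⟨k0, fun k hk => ?_⟩
      by_contra hlt
      exact hk0 (simBelow_anti (by omega) hk)
    have hne : {k : ℕ | simBelow S k I J}.Nonempty := ⟨0, simBelow_zero S I J⟩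
    have hmem := Nat.sSup_mem hne hbdd
    rw [Nat.cast_le]
    constructor
    · intro h; exact simBelow_anti h hmem
    · intro h; exact le_csSup hbdd h

lemma selDiff_comm (S : Set (Rule U)) (I J : Set U) :
    selDiff S I J = selDiff S J I := by
  have hiff : ∀ k : ℕ, simBelow S k I J ↔ simBelow S k J I := by
    intro k
    constructor <;> exact fun h r hr hrk => (h r hr hrk).symm
  have hs : {k : ℕ | simBelow S k I J} = {k : ℕ | simBelow S k J I} :=
    Set.ext fun k => hiff k
  unfold selDiff
  rw [hs]
  by_cases h : ∀ k : ℕ, simBelow S k I J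
  · rw [if_pos h, if_pos fun k => (hiff k).1 (h k)]
  · rw [if_neg h, if_neg fun h' => h fun k => (hiff k).2 (h' k)]

lemma selDiff_eq_top_iff {S : Set (Rule U)} {I J : Set U} :
    selDiff S I J = ⊤ ↔ simSel S I J := by
  unfold selDiff
  by_cases hall : ∀ k : ℕ, simBelow S k I J
  · rw [if_pos hall]
    simp only [true_iff]
    exact fun r hr => hall (r.rank + 1) r hr (by omega)
  · rw [if_neg hall]
    simp only [ENat.coe_ne_top, false_iff]
    intro hsim
    exact hall fun k r hr _ => hsim r hr

lemma exists_rank_selDiff {S : Set (Rule U)} {I J : Set U} (h : selDiff S I J ≠ ⊤) :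
    ∃ m : ℕ, selDiff S I J = (m : ℕ∞) ∧
      ∃ r ∈ S, r.rank = m ∧ degree I r ≠ degree J r := by
  have hne : ¬ ∀ k : ℕ, simBelow S k I J := by
    intro hall
    exact h (by unfold selDiff; rw [if_pos hall])
  have hval : selDiff S I J = ((sSup {k : ℕ | simBelow S k I J} : ℕ) : ℕ∞) := by
    unfold selDiff; rw [if_neg hne]
  set m := sSup {k : ℕ | simBelow S k I J} with hm
  refine ⟨m, hval, ?_⟩
  have hnot : ¬ simBelow S (m + 1) I J := by
    intro hsb
    have := (le_selDiff_iff (m + 1)).2 hsb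
    rw [hval, Nat.cast_le] at this
    omega
  have hyes : simBelow S m I J := by
    have : (m : ℕ∞) ≤ selDiff S I J := le_of_eq hval.symm
    exact (le_selDiff_iff m).1 this
  unfold simBelow at hnot
  push_neg at hnot
  obtain ⟨r, hr, hrk, hdeg⟩ := hnot
  have : ¬ r.rank < m := fun hlt => hdeg (hyes r hr hlt)
  exact ⟨r, hr, by omega, hdeg⟩

lemma enat_le_of_coe_le {d d' : ℕ∞} (h : ∀ k : ℕ, (k : ℕ∞) ≤ d → (k : ℕ∞) ≤ d') :
    d ≤ d' := by
  cases d with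
  | top =>
      cases d' with
      | top => exact le_refl _
      | coe m =>
          have := h (m + 1) le_top
          rw [Nat.cast_le] at this
          omega
  | coe n => exact h n (le_refl _)

lemma enat_eq_of_coe_le_iff {d d' : ℕ∞} (h : ∀ k : ℕ, ((k : ℕ∞) ≤ d ↔ (k : ℕ∞) ≤ d')) :
    d = d' :=
  le_antisymm (enat_le_of_coe_le fun k hk => (h k).1 hk)
    (enat_le_of_coe_le fun k hk => (h k).2 hk)

lemma selDiff_union (S S' : Set (Rule U)) (I J : Set U) :
    selDiff (S ∪ S') I J = min (selDiff S I J) (selDiff S' I J) := by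
  apply enat_eq_of_coe_le_iff
  intro k
  rw [le_min_iff, le_selDiff_iff, le_selDiff_iff, le_selDiff_iff]
  constructor
  · intro h
    exact ⟨fun r hr => h r (Or.inl hr), fun r hr => h r (Or.inr hr)⟩
  · rintro ⟨h1, h2⟩ r (hr | hr)
    · exact h1 r hr
    · exact h2 r hr

lemma enat_le_of_lt_succ {d : ℕ∞} {ρ : ℕ} (h : d < ((ρ + 1 : ℕ) : ℕ∞)) : d ≤ (ρ : ℕ∞) := by
  cases d with
  | top => simp at h
  | coe n =>
      rw [Nat.cast_lt] at h
      rw [Nat.cast_le]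
      omega

lemma gtSel_iff {S : Set (Rule U)} {I J : Set U} :
    gtSel S I J ↔ selDiff S I J ≠ ⊤ ∧
      ∀ r ∈ S, (r.rank : ℕ∞) = selDiff S I J → degree I r ≤ degree J r := by
  constructor
  · rintro ⟨r', hr', hlt, hsame, hlow⟩
    have hsb : simBelow S r'.rank I J := fun r hr hrk => hlow r hr hrk
    have h1 : (r'.rank : ℕ∞) ≤ selDiff S I J := (le_selDiff_iff _).2 hsb
    have h2 : selDiff S I J ≤ (r'.rank : ℕ∞) := by
      apply enat_le_of_lt_succ
      by_contra hcon
      push_neg at hcon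
      have := (le_selDiff_iff (r'.rank + 1)).1 hcon
      exact absurd (this r' hr' (by omega)) (ne_of_lt hlt)
    have heq : selDiff S I J = (r'.rank : ℕ∞) := le_antisymm h2 h1
    refine ⟨by rw [heq]; exact ENat.coe_ne_top _, fun r hr hrk => ?_⟩
    rw [heq, Nat.cast_inj] at hrk
    exact hsame r hr hrk
  · rintro ⟨hne, hcond⟩
    obtain ⟨m, hm, r'', hr'', hrank, hdiff⟩ := exists_rank_selDiff hne
    have hle : degree I r'' ≤ degree J r'' := hcond r'' hr'' (by rw [hrank, hm])
    have hsb : simBelow S m I J := (le_selDiff_iff m).1 (le_of_eq hm.symm)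
    refine ⟨r'', hr'', lt_of_le_of_ne hle hdiff, fun r hr hrk => ?_, fun r hr hrk => ?_⟩
    · exact hcond r hr (by rw [hrk, hrank, hm])
    · exact hsb r hr (by omega)

lemma not_gtSel_of_simSel {S : Set (Rule U)} {I J : Set U} (h : simSel S I J) :
    ¬ gtSel S I J := by
  rintro ⟨r', hr', hlt, -, -⟩
  exact absurd (h r' hr') (ne_of_lt hlt)

lemma gtSel_not_sim {S : Set (Rule U)} {I J : Set U} (h : gtSel S I J) :
    ¬ simSel S I J := fun hs => not_gtSel_of_simSel hs h

lemma gtSel_congr_left {S : Set (Rule U)} {K A J : Set U}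
    (h : ∀ r ∈ S, degree K r = degree A r) : gtSel S K J ↔ gtSel S A J := by
  constructor
  · rintro ⟨r', hr', hlt, hsame, hlow⟩
    exact ⟨r', hr', by rw [← h r' hr']; exact hlt,
      fun r hr hrk => by rw [← h r hr]; exact hsame r hr hrk,
      fun r hr hrk => by rw [← h r hr]; exact hlow r hr hrk⟩
  · rintro ⟨r', hr', hlt, hsame, hlow⟩
    exact ⟨r', hr', by rw [h r' hr']; exact hlt,
      fun r hr hrk => by rw [h r hr]; exact hsame r hr hrk,
      fun r hr hrk => by rw [h r hr]; exact hlow r hr hrk⟩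

lemma gtSel_extend {S S' : Set (Rule U)} {A B : Set U} (hg : gtSel S A B)
    (h : ∀ r ∈ S', degree A r = degree B r) : gtSel (S ∪ S') A B := by
  obtain ⟨r', hr', hlt, hsame, hlow⟩ := hg
  refine ⟨r', Or.inl hr', hlt, ?_, ?_⟩
  · rintro r (hr | hr) hrk
    · exact hsame r hr hrk
    · exact le_of_eq (h r hr)
  · rintro r (hr | hr) hrk
    · exact hlow r hr hrk
    · exact h r hr

lemma gtSel_extract {S S' : Set (Rule U)} {A B : Set U} (hg : gtSel (S ∪ S') A B)
    (h : ∀ r ∈ S', degree A r = degree B r) : gtSel S A B := by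
  obtain ⟨r', hr', hlt, hsame, hlow⟩ := hg
  rcases hr' with hr' | hr'
  · exact ⟨r', hr', hlt, fun r hr hrk => hsame r (Or.inl hr) hrk,
      fun r hr hrk => hlow r (Or.inl hr) hrk⟩
  · exact absurd (h r' hr') (ne_of_lt hlt)

end Aux2
section Aux3
variable {U : Type}

lemma outcomes_below (sem : Sem) (P : OptProblem U) (i : ℕ) :
    outcomes sem (P.below i) = outcomes sem P := by cases sem <;> rfl

lemma outcomes_union (sem : Sem) (P R : OptProblem U) (h : R.gen = ∅) :
    outcomes sem (P.union R) = outcomes sem P := by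
  cases sem
  · show models (P.gen ∪ R.gen) = models P.gen
    rw [h, Set.union_empty]
  · show AS (P.gen ∪ R.gen) = AS P.gen
    rw [h, Set.union_empty]

lemma mem_pref_iff {sem : Sem} {P : OptProblem U} {I : Set U} :
    I ∈ pref sem P ↔ I ∈ outcomes sem P ∧ ∀ J ∈ outcomes sem P, ¬ gtSel P.sel J I := by
  constructor
  · rintro ⟨h1, h2⟩
    exact ⟨h1, fun J hJ hg => h2 ⟨J, hJ, hg⟩⟩
  · rintro ⟨h1, h2⟩
    exact ⟨h1, fun ⟨J, hJ, hg⟩ => h2 J hJ hg⟩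

lemma pref_below_subset_outcomes {sem : Sem} {P : OptProblem U} {i : ℕ} :
    pref sem (P.below i) ⊆ outcomes sem P := by
  intro I hI
  have := (mem_pref_iff.1 hI).1
  rwa [outcomes_below] at this

/-- Dominance via rules of rank `< i` lifts to any union with high-ranked context. -/
lemma gtSel_union_of_below {P : OptProblem U} {S' : Set (Rule U)} {i : ℕ}
    (hS' : ∀ r ∈ S', i ≤ r.rank) {K J : Set U}
    (hg : gtSel (P.below i).sel K J) : gtSel (P.sel ∪ S') K J := by
  obtain ⟨r', hr', hlt, hsame, hlow⟩ := hg
  obtain ⟨hr'P, hr'i⟩ := hr'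
  refine ⟨r', Or.inl hr'P, hlt, ?_, ?_⟩
  · rintro r (hr | hr) hrk
    · exact hsame r ⟨hr, by omega⟩ hrk
    · exact absurd (hS' r hr) (by omega)
  · rintro r (hr | hr) hrk
    · exact hlow r ⟨hr, by omega⟩ hrk
    · exact absurd (hS' r hr) (by omega)

/-- Any dominance over a `below i`-preferred outcome has a witness of rank `≥ i`. -/
lemma witness_ge {sem : Sem} {P : OptProblem U} {i : ℕ} {S' : Set (Rule U)}
    (hS' : ∀ r ∈ S', i ≤ r.rank) {K J : Set U}
    (hJ : J ∈ pref sem (P.below i)) (hK : K ∈ outcomes sem P)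
    (hg : gtSel (P.sel ∪ S') K J) :
    ∃ r' ∈ P.sel ∪ S', i ≤ r'.rank ∧ degree K r' < degree J r' ∧
      (∀ r ∈ P.sel ∪ S', r.rank = r'.rank → degree K r ≤ degree J r) ∧
      (∀ r ∈ P.sel ∪ S', r.rank < r'.rank → degree K r = degree J r) := by
  obtain ⟨r', hr', hlt, hsame, hlow⟩ := hg
  by_cases hge : i ≤ r'.rank
  · exact ⟨r', hr', hge, hlt, hsame, hlow⟩
  push_neg at hge
  exfalso
  have hr'P : r' ∈ P.sel := by
    rcases hr' with h | h
    · exact h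
    · exact absurd (hS' r' h) (by omega)
  have hgb : gtSel (P.below i).sel K J := by
    refine ⟨r', ⟨hr'P, hge⟩, hlt, ?_, ?_⟩
    · rintro r ⟨hr, -⟩ hrk
      exact hsame r (Or.inl hr) hrk
    · rintro r ⟨hr, -⟩ hrk
      exact hlow r (Or.inl hr) hrk
  have hKb : K ∈ outcomes sem (P.below i) := by rwa [outcomes_below]
  exact (mem_pref_iff.1 hJ).2 K hKb hgb

/-- Main decomposition: membership in preferred outcomes of `P ∪ R`. -/
lemma mem_pref_union_iff {sem : Sem} {P R : OptProblem U} {i : ℕ} (hRg : R.gen = ∅)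
    (hS' : ∀ r ∈ R.sel, i ≤ r.rank) (I : Set U) :
    I ∈ pref sem (P.union R) ↔ I ∈ pref sem (P.below i) ∧
      ∀ J ∈ pref sem (P.below i), ¬ gtSel (P.sel ∪ R.sel) J I := by
  have hout : outcomes sem (P.union R) = outcomes sem P := outcomes_union sem P R hRg
  constructor
  · intro hI
    obtain ⟨hIo, hnd⟩ := mem_pref_iff.1 hI
    rw [hout] at hIo hnd
    constructor
    · rw [mem_pref_iff, outcomes_below]
      exact ⟨hIo, fun J hJo hg => hnd J hJo (gtSel_union_of_below hS' hg)⟩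
    · exact fun J hJ hg => hnd J (pref_below_subset_outcomes hJ) hg
  · rintro ⟨hIb, hprot⟩
    rw [mem_pref_iff, hout]
    refine ⟨pref_below_subset_outcomes hIb, fun J hJo hg => ?_⟩
    obtain ⟨r', hr', hgei, hlt, hsame, hlow⟩ := witness_ge hS' hIb hJo hg
    have hJb : J ∈ pref sem (P.below i) := by
      rw [mem_pref_iff, outcomes_below]
      refine ⟨hJo, fun K hKo hgK => ?_⟩
      obtain ⟨r'', hr''m, hlt'', hsame'', hlow''⟩ := hgK
      obtain ⟨hr''P, hr''i⟩ := hr''m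
      have heqJI : ∀ r ∈ (P.below i).sel, degree J r = degree I r := by
        rintro r ⟨hrP, hri⟩
        exact hlow r (Or.inl hrP) (by omega)
      have hgKI : gtSel (P.below i).sel K I := by
        refine ⟨r'', ⟨hr''P, hr''i⟩, ?_, ?_, ?_⟩
        · rw [← heqJI r'' ⟨hr''P, hr''i⟩]; exact hlt''
        · intro r hr hrk
          rw [← heqJI r hr]; exact hsame'' r hr hrk
        · intro r hr hrk
          rw [← heqJI r hr]; exact hlow'' r hr hrk
      have hKb : K ∈ outcomes sem (P.below i) := by rwa [outcomes_below]
      exact (mem_pref_iff.1 hIb).2 K hKb hgKI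
    exact hprot J hJb hg
  
end Aux3
section Aux4
variable {U : Type}

lemma enat_succ_le_of_lt {n : ℕ} {d : ℕ∞} (h : (n : ℕ∞) < d) : ((n + 1 : ℕ) : ℕ∞) ≤ d := by
  cases d with
  | top => exact le_top
  | coe m =>
      rw [Nat.cast_lt] at h
      rw [Nat.cast_le]
      omega

/-- If `J` dominates `I` w.r.t. `P.sel` and `I` is `below i`-preferred, the dominance
happens at rank `≥ i`. -/
lemma selDiff_ge_of_pref {sem : Sem} {P : OptProblem U} {i : ℕ} {I J : Set U}
    (hI : I ∈ pref sem (P.below i)) (hJo : J ∈ outcomes sem P)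
    (hAP : gtSel P.sel J I) : (i : ℕ∞) ≤ selDiff P.sel J I := by
  by_contra hcon
  push_neg at hcon
  have hne : selDiff P.sel J I ≠ ⊤ := ne_top_of_lt hcon
  obtain ⟨m, hm, r'', hr'', hrank, hdiff⟩ := exists_rank_selDiff hne
  have hmi : m < i := by
    rw [hm, Nat.cast_lt] at hcon
    exact hcon
  obtain ⟨-, hcond⟩ := gtSel_iff.1 hAP
  have hsb : simBelow P.sel m J I := (le_selDiff_iff m).1 (le_of_eq hm.symm)
  have hgb : gtSel (P.below i).sel J I := by
    refine ⟨r'', ⟨hr'', by omega⟩, ?_, ?_, ?_⟩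
    · exact lt_of_le_of_ne (hcond r'' hr'' (by rw [hrank, hm])) hdiff
    · rintro r ⟨hr, -⟩ hrk
      exact hcond r hr (by rw [hrk, hrank, hm])
    · rintro r ⟨hr, -⟩ hrk
      exact hsb r hr (by omega)
  have hJb : J ∈ outcomes sem (P.below i) := by rwa [outcomes_below]
  exact (mem_pref_iff.1 hI).2 J hJb hgb

lemma selDiff_rank_bounds {S : Set (Rule U)} {i : ℕ} {j : ℕ∞} {I J : Set U}
    (hrank : ∀ r ∈ S, i ≤ r.rank ∧ (r.rank : ℕ∞) ≤ j)
    (h : selDiff S I J ≠ ⊤) : (i : ℕ∞) ≤ selDiff S I J ∧ selDiff S I J ≤ j := by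
  obtain ⟨m, hm, r, hr, hrank', -⟩ := exists_rank_selDiff h
  obtain ⟨h1, h2⟩ := hrank r hr
  constructor
  · rw [hm, Nat.cast_le]; omega
  · rw [hm, ← hrank']; exact h2

/-- The key transfer lemma for the "if" direction. -/
lemma key_transfer {sem : Sem} {P Q R : OptProblem U} {i : ℕ} {j : ℕ∞}
    (hRrank : ∀ r ∈ R.sel, i ≤ r.rank ∧ (r.rank : ℕ∞) ≤ j)
    (hQP : pref sem (Q.below i) = pref sem (P.below i))
    (h2 : ∀ A B : Set U, A ∈ pref sem (P.below i) → B ∈ pref sem (P.below i) →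
      (gtSel P.sel A B ↔ gtSel Q.sel A B))
    (h3 : ∀ A B : Set U, A ∈ pref sem (P.below i) → B ∈ pref sem (P.below i) →
      ((i : ℕ∞) < selDiff P.sel A B ∨ (i : ℕ∞) < selDiff Q.sel A B) →
      (selDiff P.sel A B = selDiff Q.sel A B ∨
        (j < selDiff P.sel A B ∧ j < selDiff Q.sel A B)))
    {I J : Set U} (hI : I ∈ pref sem (P.below i)) (hJ : J ∈ pref sem (P.below i))
    (hG : gtSel (P.sel ∪ R.sel) J I) : gtSel (Q.sel ∪ R.sel) J I := by
  obtain ⟨hne, hcond⟩ := gtSel_iff.1 hG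
  rw [selDiff_union] at hne hcond
  set dP := selDiff P.sel J I with hdP
  set dQ := selDiff Q.sel J I with hdQ
  set dR := selDiff R.sel J I with hdR
  have hIQ : I ∈ pref sem (Q.below i) := by rw [hQP]; exact hI
  have hJQ : J ∈ pref sem (Q.below i) := by rw [hQP]; exact hJ
  rcases le_or_gt dP dR with hPR | hPR
  · -- the P-part of the dominance is decisive (or tied with R)
    have hmin : min dP dR = dP := min_eq_left hPR
    rw [hmin] at hne hcond
    have hAP : gtSel P.sel J I := by
      refine gtSel_iff.2 ⟨hne, fun r hr hrk => hcond r (Or.inl hr) hrk⟩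
    have hAQ : gtSel Q.sel J I := (h2 J I hJ hI).1 hAP
    obtain ⟨hQne, hQcond⟩ := gtSel_iff.1 hAQ
    have hdPi : (i : ℕ∞) ≤ dP :=
      selDiff_ge_of_pref hI (pref_below_subset_outcomes hJ) hAP
    have hdQi : (i : ℕ∞) ≤ dQ :=
      selDiff_ge_of_pref hIQ (pref_below_subset_outcomes hJQ) hAQ
    by_cases hPQ : dP = dQ
    · refine gtSel_iff.2 ?_
      rw [selDiff_union, ← hdQ, ← hdR]
      have hminQ : min dQ dR = dQ := min_eq_left (hPQ ▸ hPR)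
      rw [hminQ]
      refine ⟨hQne, ?_⟩
      rintro r (hr | hr) hrk
      · exact hQcond r hr hrk
      · exact hcond r (Or.inr hr) (by rw [hrk, hPQ])
    · have hior : (i : ℕ∞) < dP ∨ (i : ℕ∞) < dQ := by
        rcases eq_or_lt_of_le hdPi with he | hl
        · rcases eq_or_lt_of_le hdQi with he' | hl'
          · exact absurd (he.symm.trans he') hPQ
          · exact Or.inr hl'
        · exact Or.inl hl
      rcases h3 J I hJ hI hior with heq | ⟨hjP, hjQ⟩
      · exact absurd heq hPQ
      · have hdRtop : dR = ⊤ := by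
          by_contra hcontra
          obtain ⟨-, hb⟩ := selDiff_rank_bounds hRrank hcontra
          exact absurd (lt_of_le_of_lt (le_trans hPR hb) hjP) (lt_irrefl dP)
        refine gtSel_iff.2 ?_
        rw [selDiff_union, ← hdQ, ← hdR, hdRtop, min_eq_left (le_top : dQ ≤ ⊤)]
        refine ⟨hQne, ?_⟩
        rintro r (hr | hr) hrk
        · exact hQcond r hr hrk
        · exact le_of_eq (selDiff_eq_top_iff.1 hdRtop r hr)
  · -- the R-part of the dominance is decisive
    have hmin : min dP dR = dR := min_eq_right (le_of_lt hPR)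
    rw [hmin] at hne hcond
    have hRne : dR ≠ ⊤ := hne
    obtain ⟨hdRi, hdRj⟩ := selDiff_rank_bounds hRrank hRne
    have hdRQ : dR < dQ := by
      by_cases hPQ : dP = dQ
      · exact hPQ ▸ hPR
      · have hior : (i : ℕ∞) < dP ∨ (i : ℕ∞) < dQ :=
          Or.inl (lt_of_le_of_lt hdRi hPR)
        rcases h3 J I hJ hI hior with heq | ⟨hjP, hjQ⟩
        · exact absurd heq hPQ
        · exact lt_of_le_of_lt hdRj hjQ
    refine gtSel_iff.2 ?_
    rw [selDiff_union, ← hdQ, ← hdR, min_eq_right (le_of_lt hdRQ)]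
    refine ⟨hRne, ?_⟩
    rintro r (hr | hr) hrk
    · -- rules of Q of rank `= dR < dQ` have equal degrees
      obtain ⟨m, hm, -⟩ := exists_rank_selDiff hRne
      have hrm : r.rank = m := by
        rw [hdR, hm, Nat.cast_inj] at hrk
        exact hrk
      have : ((m + 1 : ℕ) : ℕ∞) ≤ dQ := by
        refine enat_succ_le_of_lt ?_
        rw [← hm, ← hdR]
        exact hdRQ
      exact le_of_eq ((le_selDiff_iff (m + 1)).1 this r hr (by omega))
    · exact hcond r (Or.inr hr) hrk

end Aux4
section Aux5
variable {U : Type}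

/-- A formula pinning down membership status of the atoms in `L` to that of `I`. -/
noncomputable def profileList (L : List U) (I : Set U) : Formula U :=
  L.foldr (fun a ψ =>
    Formula.conj (if a ∈ I then Formula.atom a else fNeg (Formula.atom a)) ψ) fTop

lemma sat_profileList (K : Set U) (L : List U) (I : Set U) :
    Sat K (profileList L I) ↔ ∀ a ∈ L, (a ∈ K ↔ a ∈ I) := by
  induction L with
  | nil =>
      constructor
      · intro _ a ha; exact absurd ha List.not_mem_nil
      · intro _; exact sat_fTop K
  | cons a L ih =>
      have hx : Sat K (if a ∈ I then Formula.atom a else fNeg (Formula.atom a)) ↔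
          (a ∈ K ↔ a ∈ I) := by
        by_cases hI : a ∈ I
        · rw [if_pos hI]
          show a ∈ K ↔ _
          simp [hI]
        · rw [if_neg hI]
          show ¬ (a ∈ K) ↔ _
          simp [hI]
      show Sat K (Formula.conj _ (profileList L I)) ↔ _
      show Sat K _ ∧ Sat K (profileList L I) ↔ _
      rw [ih, hx]
      constructor
      · rintro ⟨h1, h2⟩ b hb
        rcases List.mem_cons.mp hb with rfl | hb
        · exact h1
        · exact h2 b hb
      · intro h
        exact ⟨h a List.mem_cons_self, fun b hb => h b (List.mem_cons_of_mem a hb)⟩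

lemma atoms_profileList (L : List U) (I : Set U) :
    (profileList L I).atoms ⊆ {a | a ∈ L} := by
  induction L with
  | nil =>
      show (Formula.imp Formula.bot Formula.bot).atoms ⊆ _
      intro b hb
      rcases hb with h | h <;> exact absurd h (Set.notMem_empty b)
  | cons a L ih =>
      intro b hb
      show b ∈ a :: L
      rcases hb with h | h
      · have hba : b = a := by
          by_cases hI : a ∈ I
          · rw [if_pos hI] at h; exact h
          · rw [if_neg hI] at h
            rcases h with h | h
            · exact h
            · exact absurd h (Set.notMem_empty b)
        rw [hba]
        exact List.mem_cons_self
      · exact List.mem_cons_of_mem a (ih h)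

/-- The atoms of a selector. -/
def selAtoms (S : Set (Rule U)) : Set U := ⋃ r ∈ S, ruleAtoms r

lemma selAtoms_finite {S : Set (Rule U)} (h : S.Finite) : (selAtoms S).Finite :=
  h.biUnion fun r _ => ruleAtoms_finite r

lemma degree_eq_of_agree_selAtoms {S : Set (Rule U)} {K A : Set U}
    (h : ∀ a ∈ selAtoms S, (a ∈ K ↔ a ∈ A)) {r : Rule U} (hr : r ∈ S) :
    degree K r = degree A r :=
  degree_congr r fun a ha => h a (Set.mem_biUnion hr ha)

/-- Master lemma: membership of `B` in the preferred outcomes of `P` extended by a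
two-interpretation gadget context is equivalent to non-dominance by `A`. -/
lemma master {sem : Sem} {P : OptProblem U} {i : ℕ} {Sc : Set (Rule U)} (hfin : Sc.Finite)
    (hScrank : ∀ r ∈ Sc, i ≤ r.rank) {A B : Set U} {φA φB : Formula U}
    (hA : A ∈ pref sem (P.below i)) (hB : B ∈ pref sem (P.below i))
    (hKA : ∀ K, Sat K φA → ∀ r ∈ P.sel ∪ Sc, degree K r = degree A r)
    (hKB : ∀ K, Sat K φB → ∀ r ∈ P.sel ∪ Sc, degree K r = degree B r)
    (hr0 : ∃ r0 ∈ Sc, r0.rank = i ∧ degree B r0 = 1 ∧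
      ∀ K, ¬ Sat K φA → ¬ Sat K φB → degree K r0 = 2) :
    B ∈ pref sem (P.union ⟨∅, Sc, hfin⟩) ↔ ¬ gtSel (P.sel ∪ Sc) A B := by
  rw [mem_pref_union_iff rfl hScrank]
  constructor
  · intro hmem
    exact hmem.2 A hA
  · intro hng
    refine ⟨hB, fun K hK hg => ?_⟩
    by_cases hKφA : Sat K φA
    · rw [gtSel_congr_left (hKA K hKφA)] at hg
      exact hng hg
    by_cases hKφB : Sat K φB
    · obtain ⟨r', hr', hlt, -, -⟩ := hg
      rw [hKB K hKφB r' hr'] at hlt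
      exact lt_irrefl _ hlt
    obtain ⟨r0, hr0m, hr0rank, hr0B, hr0K⟩ := hr0
    obtain ⟨r', hr', hgei, hlt, hsame, hlow⟩ :=
      witness_ge hScrank hB (pref_below_subset_outcomes hK) hg
    have hK2 : degree K r0 = 2 := hr0K K hKφA hKφB
    rcases eq_or_lt_of_le (show r0.rank ≤ r'.rank by omega) with he | hl
    · have := hsame r0 (Or.inr hr0m) he
      omega
    · have := hlow r0 (Or.inr hr0m) hl
      omega

end Aux5
section Aux6
variable {U : Type}

lemma ruleAtoms_mkRule_subset {φ ψ : Formula U} {k : ℕ} {hk : 1 ≤ k} {W : Set U}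
    (h1 : φ.atoms ⊆ W) (h2 : ψ.atoms ⊆ W) : ruleAtoms (mkRule φ ψ k hk) ⊆ W := by
  intro a ha
  rcases ha with h | h
  · rcases h with h | h <;> exact absurd h (Set.notMem_empty a)
  · obtain ⟨χ, hχ, haχ⟩ := Set.mem_iUnion₂.mp h
    rcases List.mem_cons.mp hχ with rfl | hχ
    · exact h1 haχ
    · rcases List.mem_cons.mp hχ with rfl | hχ
      · exact h2 haχ
      · exact absurd hχ List.not_mem_nil

lemma atoms_fNeg_subset (φ : Formula U) : (fNeg φ).atoms ⊆ φ.atoms := by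
  intro a ha
  rcases ha with h | h
  · exact h
  · exact absurd h (Set.notMem_empty a)

lemma atoms_disj_subset {φ ψ : Formula U} {W : Set U} (h1 : φ.atoms ⊆ W)
    (h2 : ψ.atoms ⊆ W) : (Formula.disj φ ψ).atoms ⊆ W := by
  intro a ha
  rcases ha with h | h
  · exact h1 h
  · exact h2 h

lemma degrees_from_profile {W : Set U} {S Sc : Set (Rule U)} (hS : selAtoms S ⊆ W)
    (hSc : ∀ r ∈ Sc, ruleAtoms r ⊆ W) {K X : Set U} (hagr : ∀ a ∈ W, (a ∈ K ↔ a ∈ X)) :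
    ∀ r ∈ S ∪ Sc, degree K r = degree X r := by
  rintro r (hr | hr)
  · exact degree_congr r fun a ha => hagr a (hS (Set.mem_biUnion hr ha))
  · exact degree_congr r fun a ha => hagr a (hSc r hr ha)

/-- Setup: separating profile formulas for two distinct interpretations. -/
lemma profile_setup (P Q : OptProblem U) {A B : Set U} (hAB : A ≠ B) :
    ∃ (W : Set U) (φA φB : Formula U),
      selAtoms P.sel ⊆ W ∧ selAtoms Q.sel ⊆ W ∧ φA.atoms ⊆ W ∧ φB.atoms ⊆ W ∧
      Sat A φA ∧ Sat B φB ∧ ¬ Sat B φA ∧ ¬ Sat A φB ∧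
      (∀ K, Sat K φA → ∀ a ∈ W, (a ∈ K ↔ a ∈ A)) ∧
      (∀ K, Sat K φB → ∀ a ∈ W, (a ∈ K ↔ a ∈ B)) := by
  have hex : ∃ a0 : U, ¬ (a0 ∈ A ↔ a0 ∈ B) := by
    by_contra hcon
    push_neg at hcon
    exact hAB (Set.ext fun a => hcon a)
  obtain ⟨a0, ha0⟩ := hex
  have hWfin : (selAtoms P.sel ∪ selAtoms Q.sel ∪ {a0}).Finite :=
    ((selAtoms_finite P.sel_finite).union (selAtoms_finite Q.sel_finite)).union
      (Set.finite_singleton a0)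
  set W := selAtoms P.sel ∪ selAtoms Q.sel ∪ {a0} with hW
  set LW := hWfin.toFinset.toList with hLW
  have hmemL : ∀ a : U, a ∈ LW ↔ a ∈ W := by
    intro a
    rw [hLW, Finset.mem_toList, Set.Finite.mem_toFinset]
  refine ⟨W, profileList LW A, profileList LW B, ?_, ?_, ?_, ?_, ?_, ?_, ?_, ?_, ?_, ?_⟩
  · exact fun a ha => Or.inl (Or.inl ha)
  · exact fun a ha => Or.inl (Or.inr ha)
  · exact fun a ha => (hmemL a).1 (atoms_profileList LW A ha)
  · exact fun a ha => (hmemL a).1 (atoms_profileList LW B ha)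
  · exact (sat_profileList A LW A).2 fun a _ => Iff.rfl
  · exact (sat_profileList B LW B).2 fun a _ => Iff.rfl
  · intro h
    have := (sat_profileList B LW A).1 h a0 ((hmemL a0).2 (Or.inr rfl))
    exact ha0 ⟨fun hA' => this.2 hA', fun hB' => this.1 hB'⟩
  · intro h
    have := (sat_profileList A LW B).1 h a0 ((hmemL a0).2 (Or.inr rfl))
    exact ha0 ⟨fun hA' => this.1 hA', fun hB' => this.2 hB'⟩
  · exact fun K h a ha => (sat_profileList K LW A).1 h a ((hmemL a).2 ha)
  · exact fun K h a ha => (sat_profileList K LW B).1 h a ((hmemL a).2 ha)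

/-- Condition (1), one inclusion. -/
lemma pref_below_mono {sem : Sem} {P Q : OptProblem U} {i : ℕ} {j : ℕ∞}
    (hi : 1 ≤ i) (hij : (i : ℕ∞) ≤ j) (hseq : seqv sem i j P Q) :
    pref sem (P.below i) ⊆ pref sem (Q.below i) := by
  intro I hI
  have hPfin := selAtoms_finite (P.sel_finite)
  set LP := hPfin.toFinset.toList with hLP
  have hmemL : ∀ a : U, a ∈ LP ↔ a ∈ selAtoms P.sel := by
    intro a
    rw [hLP, Finset.mem_toList, Set.Finite.mem_toFinset]
  set φI := profileList LP I with hφI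
  set rI := mkRule φI (fNeg φI) i hi with hrI
  have hdegI : degree I rI = 1 := by
    rw [hrI, degree_mkRule, if_pos ((sat_profileList I LP I).2 fun a _ => Iff.rfl)]
  set Rc : OptProblem U := ⟨∅, {rI}, Set.finite_singleton rI⟩ with hRc
  have hrank : ∀ r ∈ Rc.sel, i ≤ r.rank := by
    rintro r rfl
    exact le_refl i
  have hmem : I ∈ pref sem (P.union Rc) := by
    rw [mem_pref_union_iff rfl hrank]
    refine ⟨hI, fun J hJ hg => ?_⟩
    by_cases hsat : Sat J φI
    · -- J agrees with I on all atoms of P.sel, and on rI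
      have hagr : ∀ a ∈ selAtoms P.sel, (a ∈ J ↔ a ∈ I) := fun a ha =>
        (sat_profileList J LP I).1 hsat a ((hmemL a).2 ha)
      have heq : ∀ r ∈ P.sel ∪ ({rI} : Set (Rule U)), degree J r = degree I r := by
        rintro r (hr | hr)
        · exact degree_eq_of_agree_selAtoms hagr hr
        · rw [hr, hrI, degree_mkRule, degree_mkRule, if_pos hsat,
            if_pos ((sat_profileList I LP I).2 fun a _ => Iff.rfl)]
      obtain ⟨r', hr', hlt, -, -⟩ := hg
      rw [heq r' hr'] at hlt
      exact lt_irrefl _ hlt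
    · have hdegJ : degree J rI = 2 := by
        rw [hrI, degree_mkRule, if_neg hsat, if_pos (show Sat J (fNeg φI) from hsat)]
      obtain ⟨r', hr', hgei, hlt, hsame, hlow⟩ :=
        witness_ge hrank hI (pref_below_subset_outcomes hJ) hg
      rcases eq_or_lt_of_le (show rI.rank ≤ r'.rank from hgei) with he | hl
      · have := hsame rI (Or.inr rfl) he
        omega
      · have := hlow rI (Or.inr rfl) hl
        omega
  have hint : inRankInterval i j Rc.sel := by
    rintro r rfl
    exact ⟨le_refl i, hij⟩
  have := hseq Rc rfl hint
  rw [this] at hmem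
  exact ((mem_pref_union_iff rfl hrank I).1 hmem).1

/-- Condition (2), one direction of the transfer. -/
lemma gt_transfer {sem : Sem} {P Q : OptProblem U} {i : ℕ} {j : ℕ∞}
    (hi : 1 ≤ i) (hij : (i : ℕ∞) ≤ j) (hseq : seqv sem i j P Q)
    (h1 : pref sem (P.below i) = pref sem (Q.below i)) {A B : Set U}
    (hA : A ∈ pref sem (P.below i)) (hB : B ∈ pref sem (P.below i))
    (hgt : gtSel P.sel A B) : gtSel Q.sel A B := by
  by_contra hng
  have hAB : A ≠ B := by
    rintro rfl
    obtain ⟨r', -, hlt, -, -⟩ := hgt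
    exact lt_irrefl _ hlt
  obtain ⟨W, φA, φB, hWP, hWQ, haA, haB, hsA, hsB, hnBA, hnAB, hagrA, hagrB⟩ :=
    profile_setup P Q hAB
  set r0 := mkRule (Formula.disj φA φB) (fNeg (Formula.disj φA φB)) i hi with hr0
  have hr0sub : ruleAtoms r0 ⊆ W :=
    ruleAtoms_mkRule_subset (atoms_disj_subset haA haB)
      (subset_trans (atoms_fNeg_subset _) (atoms_disj_subset haA haB))
  have hScsub : ∀ r ∈ ({r0} : Set (Rule U)), ruleAtoms r ⊆ W := by
    rintro r rfl
    exact hr0sub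
  have hd0A : degree A r0 = 1 := by
    rw [hr0, degree_mkRule, if_pos (show Sat A (Formula.disj φA φB) from Or.inl hsA)]
  have hd0B : degree B r0 = 1 := by
    rw [hr0, degree_mkRule, if_pos (show Sat B (Formula.disj φA φB) from Or.inr hsB)]
  have hd0K : ∀ K, ¬ Sat K φA → ¬ Sat K φB → degree K r0 = 2 := by
    intro K h1' h2'
    have hnd : ¬ Sat K (Formula.disj φA φB) := by
      rintro (h | h)
      · exact h1' h
      · exact h2' h
    rw [hr0, degree_mkRule, if_neg hnd, if_pos (show Sat K (fNeg (Formula.disj φA φB)) from hnd)]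
  set Rc : OptProblem U := ⟨∅, {r0}, Set.finite_singleton r0⟩ with hRc
  have hrank : ∀ r ∈ ({r0} : Set (Rule U)), i ≤ r.rank := by
    rintro r rfl
    exact le_refl i
  have hKA_P : ∀ K, Sat K φA → ∀ r ∈ P.sel ∪ ({r0} : Set (Rule U)), degree K r = degree A r :=
    fun K h => degrees_from_profile hWP hScsub (hagrA K h)
  have hKB_P : ∀ K, Sat K φB → ∀ r ∈ P.sel ∪ ({r0} : Set (Rule U)), degree K r = degree B r :=
    fun K h => degrees_from_profile hWP hScsub (hagrB K h)
  have hKA_Q : ∀ K, Sat K φA → ∀ r ∈ Q.sel ∪ ({r0} : Set (Rule U)), degree K r = degree A r :=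
    fun K h => degrees_from_profile hWQ hScsub (hagrA K h)
  have hKB_Q : ∀ K, Sat K φB → ∀ r ∈ Q.sel ∪ ({r0} : Set (Rule U)), degree K r = degree B r :=
    fun K h => degrees_from_profile hWQ hScsub (hagrB K h)
  have hr0ex : ∃ rr ∈ ({r0} : Set (Rule U)), rr.rank = i ∧ degree B rr = 1 ∧
      ∀ K, ¬ Sat K φA → ¬ Sat K φB → degree K rr = 2 :=
    ⟨r0, rfl, rfl, hd0B, hd0K⟩
  have hmasterP := master (sem := sem) (P := P) (Set.finite_singleton r0) hrank
    hA hB hKA_P hKB_P hr0ex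
  have hmasterQ := master (sem := sem) (P := Q) (Set.finite_singleton r0) hrank
    (h1 ▸ hA) (h1 ▸ hB) hKA_Q hKB_Q hr0ex
  have hgtP : gtSel (P.sel ∪ ({r0} : Set (Rule U))) A B := by
    refine gtSel_extend hgt ?_
    rintro r rfl
    rw [hd0A, hd0B]
  have hngtQ : ¬ gtSel (Q.sel ∪ ({r0} : Set (Rule U))) A B := by
    intro hg
    refine hng (gtSel_extract hg ?_)
    rintro r rfl
    rw [hd0A, hd0B]
  have hBP : B ∉ pref sem (P.union Rc) := by
    rw [hmasterP]
    exact fun h => h hgtP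
  have hBQ : B ∈ pref sem (Q.union Rc) := hmasterQ.2 hngtQ
  have hint : inRankInterval i j Rc.sel := by
    rintro r rfl
    exact ⟨le_refl i, hij⟩
  rw [hseq Rc rfl hint] at hBP
  exact hBP hBQ

end Aux6
section Aux7
variable {U : Type}

/-- Forward direction for condition (3), case `diff P < i < diff Q`. -/
lemma diff_low {sem : Sem} {P Q : OptProblem U} {i : ℕ} {j : ℕ∞}
    (hi : 1 ≤ i) (hij : (i : ℕ∞) ≤ j) (hseq : seqv sem i j P Q)
    (h1 : pref sem (P.below i) = pref sem (Q.below i)) {I J : Set U}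
    (hI : I ∈ pref sem (P.below i)) (hJ : J ∈ pref sem (P.below i))
    (hdP : selDiff P.sel I J < (i : ℕ∞)) (hdQ : (i : ℕ∞) < selDiff Q.sel I J) :
    False := by
  have hne : selDiff P.sel I J ≠ ⊤ := ne_top_of_lt hdP
  obtain ⟨m, hm, r'', hr''P, hr''rank, hr''diff⟩ := exists_rank_selDiff hne
  have hmi : m < i := by rwa [hm, Nat.cast_lt] at hdP
  have hIJ : I ≠ J := by rintro rfl; exact hr''diff rfl
  obtain ⟨W, φA, φB, hWP, hWQ, haA, haB, hsA, hsB, hnBA, hnAB, hagrA, hagrB⟩ :=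
    profile_setup P Q hIJ
  set r0 := mkRule (Formula.disj φA φB) (fNeg (Formula.disj φA φB)) i hi with hr0def
  set r1 := mkRule (fNeg φB) φB i hi with hr1def
  have hrank0 : r0.rank = i := rfl
  have hrank1 : r1.rank = i := rfl
  have hd0I : degree I r0 = 1 := by
    rw [hr0def, degree_mkRule, if_pos (show Sat I (Formula.disj φA φB) from Or.inl hsA)]
  have hd0J : degree J r0 = 1 := by
    rw [hr0def, degree_mkRule, if_pos (show Sat J (Formula.disj φA φB) from Or.inr hsB)]
  have hd0K : ∀ K, ¬ Sat K φA → ¬ Sat K φB → degree K r0 = 2 := by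
    intro K h1' h2'
    have hnd : ¬ Sat K (Formula.disj φA φB) := by rintro (h | h); exacts [h1' h, h2' h]
    rw [hr0def, degree_mkRule, if_neg hnd,
      if_pos (show Sat K (fNeg (Formula.disj φA φB)) from hnd)]
  have hd1I : degree I r1 = 1 := by
    rw [hr1def, degree_mkRule, if_pos (show Sat I (fNeg φB) from hnAB)]
  have hd1J : degree J r1 = 2 := by
    rw [hr1def, degree_mkRule, if_neg (show ¬ Sat J (fNeg φB) from fun hn => hn hsB),
      if_pos hsB]
  have hfin : ({r0, r1} : Set (Rule U)).Finite :=
    (Set.finite_singleton r1).insert r0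
  have hrank : ∀ r ∈ ({r0, r1} : Set (Rule U)), i ≤ r.rank := by
    rintro r (rfl | rfl) <;> omega
  have hScsub : ∀ r ∈ ({r0, r1} : Set (Rule U)), ruleAtoms r ⊆ W := by
    rintro r (rfl | rfl)
    · exact ruleAtoms_mkRule_subset (atoms_disj_subset haA haB)
        (subset_trans (atoms_fNeg_subset _) (atoms_disj_subset haA haB))
    · exact ruleAtoms_mkRule_subset (subset_trans (atoms_fNeg_subset _) haB) haB
  have hKA_P : ∀ K, Sat K φA → ∀ r ∈ P.sel ∪ ({r0, r1} : Set (Rule U)),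
      degree K r = degree I r :=
    fun K h => degrees_from_profile (Sc := {r0, r1}) hWP hScsub (hagrA K h)
  have hKB_P : ∀ K, Sat K φB → ∀ r ∈ P.sel ∪ ({r0, r1} : Set (Rule U)),
      degree K r = degree J r :=
    fun K h => degrees_from_profile (Sc := {r0, r1}) hWP hScsub (hagrB K h)
  have hKA_Q : ∀ K, Sat K φA → ∀ r ∈ Q.sel ∪ ({r0, r1} : Set (Rule U)),
      degree K r = degree I r :=
    fun K h => degrees_from_profile (Sc := {r0, r1}) hWQ hScsub (hagrA K h)
  have hKB_Q : ∀ K, Sat K φB → ∀ r ∈ Q.sel ∪ ({r0, r1} : Set (Rule U)),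
      degree K r = degree J r :=
    fun K h => degrees_from_profile (Sc := {r0, r1}) hWQ hScsub (hagrB K h)
  have hr0ex : ∃ rr ∈ ({r0, r1} : Set (Rule U)), rr.rank = i ∧ degree J rr = 1 ∧
      ∀ K, ¬ Sat K φA → ¬ Sat K φB → degree K rr = 2 :=
    ⟨r0, Or.inl rfl, rfl, hd0J, hd0K⟩
  set Rc : OptProblem U := ⟨∅, {r0, r1}, hfin⟩ with hRcdef
  have hmasterP := master (sem := sem) (P := P) hfin hrank hI hJ hKA_P hKB_P hr0ex
  have hmasterQ := master (sem := sem) (P := Q) hfin hrank (h1 ▸ hI) (h1 ▸ hJ)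
    hKA_Q hKB_Q hr0ex
  have hnogt : ¬ gtSel (P.sel ∪ ({r0, r1} : Set (Rule U))) I J := by
    rintro ⟨r', hr', hlt, hsame, hlow⟩
    by_cases hge : i ≤ r'.rank
    · exact hr''diff (hlow r'' (Or.inl hr''P) (by omega))
    · push_neg at hge
      have hr'P : r' ∈ P.sel := by
        rcases hr' with h | h
        · exact h
        · rcases h with rfl | rfl <;> omega
      have hgb : gtSel (P.below i).sel I J := ⟨r', ⟨hr'P, hge⟩, hlt,
        fun r hr hrk => hsame r (Or.inl hr.1) hrk,
        fun r hr hrk => hlow r (Or.inl hr.1) hrk⟩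
      exact (mem_pref_iff.1 hJ).2 I
        (by rw [outcomes_below]; exact pref_below_subset_outcomes hI) hgb
  have hJP : J ∈ pref sem (P.union Rc) := hmasterP.2 hnogt
  have hsimQ : ∀ r ∈ Q.sel, r.rank ≤ i → degree I r = degree J r := by
    intro r hr hrk
    exact (le_selDiff_iff (i + 1)).1 (enat_succ_le_of_lt hdQ) r hr (by omega)
  have hgtQ : gtSel (Q.sel ∪ ({r0, r1} : Set (Rule U))) I J := by
    refine ⟨r1, Or.inr (Or.inr rfl), by omega, ?_, ?_⟩
    · rintro r (hr | hr) hrk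
      · exact le_of_eq (hsimQ r hr (by omega))
      · rcases hr with rfl | rfl
        · exact le_of_eq (by rw [hd0I, hd0J])
        · rw [hd1I, hd1J]; omega
    · rintro r (hr | hr) hrk
      · exact hsimQ r hr (by omega)
      · rcases hr with rfl | rfl <;> omega
  have hJQ : J ∉ pref sem (Q.union Rc) := by
    rw [hmasterQ]
    exact fun h => h hgtQ
  have hint : inRankInterval i j Rc.sel := by
    rintro r (rfl | rfl) <;> exact ⟨le_refl i, hij⟩
  rw [hseq Rc rfl hint] at hJP
  exact hJQ hJP

/-- Forward direction for condition (3), case `i ≤ diff P = m < diff Q`, `m ≤ j`,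
with a rank-`m` rule of `P` strictly favouring `A`. -/
lemma diff_high {sem : Sem} {P Q : OptProblem U} {i : ℕ} {j : ℕ∞} {m : ℕ}
    (hi : 1 ≤ i) (hij : (i : ℕ∞) ≤ j) (hseq : seqv sem i j P Q)
    (h1 : pref sem (P.below i) = pref sem (Q.below i)) {A B : Set U}
    (hA : A ∈ pref sem (P.below i)) (hB : B ∈ pref sem (P.below i))
    (hm : selDiff P.sel A B = (m : ℕ∞)) (him : i ≤ m) (hmj : (m : ℕ∞) ≤ j)
    (hdQ : selDiff P.sel A B < selDiff Q.sel A B)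
    (hex : ∃ r'' ∈ P.sel, r''.rank = m ∧ degree A r'' < degree B r'') : False := by
  obtain ⟨r'', hr''P, hr''rank, hr''lt⟩ := hex
  have hAB : B ≠ A := by rintro rfl; omega
  obtain ⟨W, φB', φA', hWP, hWQ, haB, haA, hsB, hsA, hnAB', hnBA', hagrB, hagrA⟩ :=
    profile_setup P Q hAB
  -- φB' is the profile of B, φA' that of A; B will play the dominator role.
  have hm1 : 1 ≤ m := le_trans hi him
  set r0 := mkRule (Formula.disj φB' φA') (fNeg (Formula.disj φB' φA')) i hi with hr0def
  set r1 := mkRule (fNeg φA') φA' m hm1 with hr1def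
  have hrank0 : r0.rank = i := rfl
  have hrank1 : r1.rank = m := rfl
  have hd0A : degree A r0 = 1 := by
    rw [hr0def, degree_mkRule, if_pos (show Sat A (Formula.disj φB' φA') from Or.inr hsA)]
  have hd0B : degree B r0 = 1 := by
    rw [hr0def, degree_mkRule, if_pos (show Sat B (Formula.disj φB' φA') from Or.inl hsB)]
  have hd0K : ∀ K, ¬ Sat K φB' → ¬ Sat K φA' → degree K r0 = 2 := by
    intro K h1' h2'
    have hnd : ¬ Sat K (Formula.disj φB' φA') := by rintro (h | h); exacts [h1' h, h2' h]
    rw [hr0def, degree_mkRule, if_neg hnd,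
      if_pos (show Sat K (fNeg (Formula.disj φB' φA')) from hnd)]
  have hd1A : degree A r1 = 2 := by
    rw [hr1def, degree_mkRule, if_neg (show ¬ Sat A (fNeg φA') from fun hn => hn hsA),
      if_pos hsA]
  have hd1B : degree B r1 = 1 := by
    rw [hr1def, degree_mkRule, if_pos (show Sat B (fNeg φA') from hnBA')]
  have hfin : ({r0, r1} : Set (Rule U)).Finite := (Set.finite_singleton r1).insert r0
  have hrank : ∀ r ∈ ({r0, r1} : Set (Rule U)), i ≤ r.rank := by
    rintro r (rfl | rfl) <;> omega
  have hScsub : ∀ r ∈ ({r0, r1} : Set (Rule U)), ruleAtoms r ⊆ W := by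
    rintro r (rfl | rfl)
    · exact ruleAtoms_mkRule_subset (atoms_disj_subset haB haA)
        (subset_trans (atoms_fNeg_subset _) (atoms_disj_subset haB haA))
    · exact ruleAtoms_mkRule_subset (subset_trans (atoms_fNeg_subset _) haA) haA
  have hKB_P : ∀ K, Sat K φB' → ∀ r ∈ P.sel ∪ ({r0, r1} : Set (Rule U)),
      degree K r = degree B r :=
    fun K h => degrees_from_profile (Sc := {r0, r1}) hWP hScsub (hagrB K h)
  have hKA_P : ∀ K, Sat K φA' → ∀ r ∈ P.sel ∪ ({r0, r1} : Set (Rule U)),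
      degree K r = degree A r :=
    fun K h => degrees_from_profile (Sc := {r0, r1}) hWP hScsub (hagrA K h)
  have hKB_Q : ∀ K, Sat K φB' → ∀ r ∈ Q.sel ∪ ({r0, r1} : Set (Rule U)),
      degree K r = degree B r :=
    fun K h => degrees_from_profile (Sc := {r0, r1}) hWQ hScsub (hagrB K h)
  have hKA_Q : ∀ K, Sat K φA' → ∀ r ∈ Q.sel ∪ ({r0, r1} : Set (Rule U)),
      degree K r = degree A r :=
    fun K h => degrees_from_profile (Sc := {r0, r1}) hWQ hScsub (hagrA K h)
  have hr0ex : ∃ rr ∈ ({r0, r1} : Set (Rule U)), rr.rank = i ∧ degree A rr = 1 ∧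
      ∀ K, ¬ Sat K φB' → ¬ Sat K φA' → degree K rr = 2 :=
    ⟨r0, Or.inl rfl, rfl, hd0A, hd0K⟩
  set Rc : OptProblem U := ⟨∅, {r0, r1}, hfin⟩ with hRcdef
  have hmasterP := master (sem := sem) (P := P) hfin hrank hB hA hKB_P hKA_P hr0ex
  have hmasterQ := master (sem := sem) (P := Q) hfin hrank (h1 ▸ hB) (h1 ▸ hA)
    hKB_Q hKA_Q hr0ex
  have hsbP : simBelow P.sel m A B := (le_selDiff_iff m).1 (le_of_eq hm.symm)
  have hnogt : ¬ gtSel (P.sel ∪ ({r0, r1} : Set (Rule U))) B A := by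
    rintro ⟨r', hr', hlt, hsame, hlow⟩
    rcases lt_trichotomy r'.rank m with hc | hc | hc
    · rcases hr' with h | h
      · have := hsbP r' h hc
        omega
      · rcases h with rfl | rfl
        · -- r' = r0 : degrees equal
          omega
        · omega
    · have := hsame r'' (Or.inl hr''P) (by omega)
      omega
    · have := hlow r'' (Or.inl hr''P) (by omega)
      omega
  have hAP : A ∈ pref sem (P.union Rc) := hmasterP.2 hnogt
  have hsimQ : ∀ r ∈ Q.sel, r.rank ≤ m → degree B r = degree A r := by
    intro r hr hrk
    exact ((le_selDiff_iff (m + 1)).1 (enat_succ_le_of_lt (hm ▸ hdQ)) r hr (by omega)).symm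
  have hgtQ : gtSel (Q.sel ∪ ({r0, r1} : Set (Rule U))) B A := by
    refine ⟨r1, Or.inr (Or.inr rfl), by omega, ?_, ?_⟩
    · rintro r (hr | hr) hrk
      · exact le_of_eq (hsimQ r hr (by omega))
      · rcases hr with rfl | rfl
        · exact le_of_eq (by rw [hd0B, hd0A])
        · rw [hd1B, hd1A]; omega
    · rintro r (hr | hr) hrk
      · exact hsimQ r hr (by omega)
      · rcases hr with rfl | rfl
        · rw [hd0B, hd0A]
        · omega
  have hAQ : A ∉ pref sem (Q.union Rc) := by
    rw [hmasterQ]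
    exact fun h => h hgtQ
  have hint : inRankInterval i j Rc.sel := by
    rintro r (rfl | rfl)
    · exact ⟨le_refl i, hij⟩
    · exact ⟨him, hmj⟩
  rw [hseq Rc rfl hint] at hAP
  exact hAQ hAP

/-- The asymmetric core of condition (3). -/
lemma diff_asym {sem : Sem} {P Q : OptProblem U} {i : ℕ} {j : ℕ∞}
    (hi : 1 ≤ i) (hij : (i : ℕ∞) ≤ j) (hseq : seqv sem i j P Q)
    (h1 : pref sem (P.below i) = pref sem (Q.below i)) {I J : Set U}
    (hI : I ∈ pref sem (P.below i)) (hJ : J ∈ pref sem (P.below i))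
    (hlt : selDiff P.sel I J < selDiff Q.sel I J)
    (hcase : (i : ℕ∞) < selDiff P.sel I J ∨ (i : ℕ∞) < selDiff Q.sel I J)
    (hnj : ¬ (j < selDiff P.sel I J ∧ j < selDiff Q.sel I J)) : False := by
  have hne : selDiff P.sel I J ≠ ⊤ := ne_top_of_lt hlt
  obtain ⟨m, hm, r'', hr''P, hr''rank, hr''diff⟩ := exists_rank_selDiff hne
  have hmj : (m : ℕ∞) ≤ j := by
    by_contra hc
    push_neg at hc
    exact hnj ⟨by rw [hm]; exact hc, lt_trans (by rw [hm]; exact hc) hlt⟩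
  by_cases hmi : m < i
  · have hdQi : (i : ℕ∞) < selDiff Q.sel I J := by
      rcases hcase with h | h
      · rw [hm, Nat.cast_lt] at h
        omega
      · exact h
    exact diff_low hi hij hseq h1 hI hJ (by rw [hm, Nat.cast_lt]; omega) hdQi
  · push_neg at hmi
    rcases lt_or_gt_of_ne hr''diff with hcc | hcc
    · exact diff_high hi hij hseq h1 hI hJ hm hmi hmj hlt ⟨r'', hr''P, hr''rank, hcc⟩
    · refine diff_high hi hij hseq h1 hJ hI ?_ hmi hmj ?_ ⟨r'', hr''P, hr''rank, hcc⟩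
      · rw [selDiff_comm]; exact hm
      · rw [selDiff_comm P.sel J I, selDiff_comm Q.sel J I]; exact hlt

end Aux7
lemma seqv_symm {U : Type} {sem : Sem} {i : ℕ} {j : ℕ∞} {P Q : OptProblem U}
    (h : seqv sem i j P Q) : seqv sem i j Q P :=
  fun R h1 h2 => (h R h1 h2).symm

/-- Theorem 2: characterization of strong sel-equivalence
`P ≡^{s,[i,j]} Q` for ranked optimization problems. -/
theorem stmt1 {U : Type} [Countable U] (sem : Sem) (P Q : OptProblem U)
    (i : ℕ) (j : ℕ∞) (hi : 1 ≤ i) (hij : (i : ℕ∞) ≤ j) :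
    seqv sem i j P Q ↔
      (pref sem (P.below i) = pref sem (Q.below i) ∧
       restrictRel (gtSel P.sel) (pref sem (P.below i)) =
         restrictRel (gtSel Q.sel) (pref sem (Q.below i)) ∧
       (∀ I ∈ pref sem (P.below i), ∀ J ∈ pref sem (P.below i),
         ((i : ℕ∞) < diff P I J ∨ (i : ℕ∞) < diff Q I J) →
           (diff P I J = diff Q I J ∨ (j < diff P I J ∧ j < diff Q I J)))) := by
  constructor
  · -- necessity
    intro hseq
    have h1 : pref sem (P.below i) = pref sem (Q.below i) :=
      Set.Subset.antisymm (pref_below_mono hi hij hseq)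
        (pref_below_mono hi hij (seqv_symm hseq))
    refine ⟨h1, ?_, ?_⟩
    · funext A B
      apply propext
      constructor
      · rintro ⟨hg, hA, hB⟩
        exact ⟨gt_transfer hi hij hseq h1 hA hB hg, h1 ▸ hA, h1 ▸ hB⟩
      · rintro ⟨hg, hA, hB⟩
        exact ⟨gt_transfer hi hij (seqv_symm hseq) h1.symm hA hB hg,
          h1.symm ▸ hA, h1.symm ▸ hB⟩
    · intro I hI J hJ hcase
      rw [diff_eq_selDiff, diff_eq_selDiff] at hcase ⊢
      by_contra hcon
      obtain ⟨hne', hnj⟩ := not_or.mp hcon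
      rcases lt_or_gt_of_ne hne' with hlt | hlt
      · exact diff_asym hi hij hseq h1 hI hJ hlt hcase hnj
      · exact diff_asym hi hij (seqv_symm hseq) h1.symm (h1 ▸ hI) (h1 ▸ hJ) hlt
          hcase.symm (fun hh => hnj ⟨hh.2, hh.1⟩)
  · -- sufficiency
    rintro ⟨h1, h2, h3⟩
    intro R hRg hRint
    have hRrk : ∀ r ∈ R.sel, i ≤ r.rank := fun r hr => (hRint r hr).1
    have h2' : ∀ A B : Set U, A ∈ pref sem (P.below i) → B ∈ pref sem (P.below i) →
        (gtSel P.sel A B ↔ gtSel Q.sel A B) := by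
      intro A B hA hB
      have heq := congrFun (congrFun h2 A) B
      constructor
      · intro hg
        exact ((iff_of_eq heq).1 ⟨hg, hA, hB⟩).1
      · intro hg
        exact ((iff_of_eq heq).2 ⟨hg, h1 ▸ hA, h1 ▸ hB⟩).1
    have h3' : ∀ A B : Set U, A ∈ pref sem (P.below i) → B ∈ pref sem (P.below i) →
        ((i : ℕ∞) < selDiff P.sel A B ∨ (i : ℕ∞) < selDiff Q.sel A B) →
        (selDiff P.sel A B = selDiff Q.sel A B ∨
          (j < selDiff P.sel A B ∧ j < selDiff Q.sel A B)) := by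
      intro A B hA hB hc
      have := h3 A hA B hB
      rw [diff_eq_selDiff P, diff_eq_selDiff Q] at this
      exact this hc
    have h2'' : ∀ A B : Set U, A ∈ pref sem (Q.below i) → B ∈ pref sem (Q.below i) →
        (gtSel Q.sel A B ↔ gtSel P.sel A B) :=
      fun A B hA hB => (h2' A B (h1.symm ▸ hA) (h1.symm ▸ hB)).symm
    have h3'' : ∀ A B : Set U, A ∈ pref sem (Q.below i) → B ∈ pref sem (Q.below i) →
        ((i : ℕ∞) < selDiff Q.sel A B ∨ (i : ℕ∞) < selDiff P.sel A B) →
        (selDiff Q.sel A B = selDiff P.sel A B ∨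
          (j < selDiff Q.sel A B ∧ j < selDiff P.sel A B)) := by
      intro A B hA hB hc
      rcases h3' A B (h1.symm ▸ hA) (h1.symm ▸ hB) hc.symm with he | ⟨ha, hb⟩
      · exact Or.inl he.symm
      · exact Or.inr ⟨hb, ha⟩
    ext I
    rw [mem_pref_union_iff hRg hRrk, mem_pref_union_iff hRg hRrk]
    constructor
    · rintro ⟨hIb, hprot⟩
      refine ⟨h1 ▸ hIb, fun J hJ hg => ?_⟩
      exact hprot J (h1.symm ▸ hJ)
        (key_transfer hRint h1 h2'' h3'' (h1 ▸ hIb) hJ hg)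
    · rintro ⟨hIb, hprot⟩
      refine ⟨h1.symm ▸ hIb, fun J hJ hg => ?_⟩
      exact hprot J (h1 ▸ hJ)
        (key_transfer hRint h1.symm h2' h3' (h1.symm ▸ hIb) hJ hg)
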